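/- Let λ ≥ 2 be a real number, d ≥ 1, r ≥ 1, and let b : Fin (d+1) → Fin r be any map (assigning each of the d+1 indices to one of r blocks). Then there exists an affinely independent family p : Fin (d+1) → EuclideanSpace ℝ (Fin d) such that for all i ≠ j, dist (p i) (p j) = 1 if b i = b j and dist (p i) (p j) = λ if b i ≠ b j. -/

import Mathlib

lemma sum_ite_dist_sq {ι : Type*} [Fintype ι] [DecidableEq ι] (a : ℝ) (ha : 0 ≤ a)
    {i j : ι} (h : i ≠ j) :
    ∑ x : ι, dist (if x = i then a else 0) (if x = j then a else 0) ^ 2 = 2 * a ^ 2 := by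
  have key : ∀ x : ι, dist (if x = i then a else 0) (if x = j then a else 0) ^ 2
      = (if x = i then a ^ 2 else 0) + (if x = j then a ^ 2 else 0) := by
    intro x
    by_cases hxi : x = i <;> by_cases hxj : x = j <;>
      simp_all [Real.dist_eq, abs_of_nonneg ha, sq_abs]
  rw [Finset.sum_congr rfl fun x _ => key x, Finset.sum_add_distrib]
  simp [two_mul]

theorem stmt_2 (lam : ℝ) (hlam : 2 ≤ lam) (d r : ℕ) (hd : 1 ≤ d) (hr : 1 ≤ r)
    (b : Fin (d + 1) → Fin r) :
    ∃ p : Fin (d + 1) → EuclideanSpace ℝ (Fin d),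
      AffineIndependent ℝ p ∧
      ∀ i j, i ≠ j →
        (b i = b j → dist (p i) (p j) = 1) ∧ (b i ≠ b j → dist (p i) (p j) = lam) := by
  set a : ℝ := Real.sqrt (1 / 2) with ha_def
  set c : ℝ := Real.sqrt ((lam ^ 2 - 1) / 2) with hc_def
  have ha0 : 0 ≤ a := Real.sqrt_nonneg _
  have hc0 : 0 ≤ c := Real.sqrt_nonneg _
  have ha2 : a ^ 2 = 1 / 2 := Real.sq_sqrt (by norm_num)
  have hlam0 : 0 ≤ lam := le_trans (by norm_num) hlam
  have hc2 : c ^ 2 = (lam ^ 2 - 1) / 2 := Real.sq_sqrt (by nlinarith)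
  have hapos : a ≠ 0 := by
    intro h; rw [h] at ha2; norm_num at ha2
  -- the construction in a big space
  set q : Fin (d + 1) → EuclideanSpace ℝ (Fin (d + 1) ⊕ Fin r) :=
    fun i => WithLp.toLp 2 (Sum.elim (fun j => if j = i then a else 0) (fun k => if k = b i then c else 0))
    with hq_def
  -- distance computations
  have hdist : ∀ i j : Fin (d + 1), i ≠ j →
      (b i = b j → dist (q i) (q j) = 1) ∧ (b i ≠ b j → dist (q i) (q j) = lam) := by
    intro i j hij
    rw [EuclideanSpace.dist_eq] at *
    constructor
    · intro hb
      have : (∑ x : Fin (d + 1) ⊕ Fin r, dist (q i x) (q j x) ^ 2) = 1 := by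
        rw [Fintype.sum_sum_type]
        have h1 : ∑ x : Fin (d + 1), dist (q i (Sum.inl x)) (q j (Sum.inl x)) ^ 2
            = 2 * a ^ 2 := sum_ite_dist_sq a ha0 hij
        have h2 : ∑ x : Fin r, dist (q i (Sum.inr x)) (q j (Sum.inr x)) ^ 2 = 0 := by
          simp [hq_def, hb]
        rw [h1, h2, ha2]; ring
      rw [this, Real.sqrt_one]
    · intro hb
      have : (∑ x : Fin (d + 1) ⊕ Fin r, dist (q i x) (q j x) ^ 2) = lam ^ 2 := by
        rw [Fintype.sum_sum_type]
        have h1 : ∑ x : Fin (d + 1), dist (q i (Sum.inl x)) (q j (Sum.inl x)) ^ 2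
            = 2 * a ^ 2 := sum_ite_dist_sq a ha0 hij
        have h2 : ∑ x : Fin r, dist (q i (Sum.inr x)) (q j (Sum.inr x)) ^ 2
            = 2 * c ^ 2 := sum_ite_dist_sq c hc0 hb
        rw [h1, h2, ha2, hc2]; ring
      rw [this, Real.sqrt_sq hlam0]
  -- linear independence of the differences
  have hLI : LinearIndependent ℝ (fun i : {x : Fin (d + 1) // x ≠ 0} => q i - q 0) := by
    rw [Fintype.linearIndependent_iff]
    intro g hg i₀
    have := congrArg (EuclideanSpace.proj (𝕜 := ℝ) (Sum.inl i₀.val : Fin (d + 1) ⊕ Fin r)) hg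
    simp only [map_sum, map_smul, map_sub, map_zero, smul_eq_mul] at this
    have this2 : ∑ i : {x : Fin (d + 1) // x ≠ 0},
        g i * (q i (Sum.inl i₀.val) - q 0 (Sum.inl i₀.val)) = 0 := this
    have heval : ∀ i : {x : Fin (d + 1) // x ≠ 0},
        g i * (q i (Sum.inl i₀.val) - q 0 (Sum.inl i₀.val))
        = if i = i₀ then g i * a else 0 := by
      intro i
      have h0 : q 0 (Sum.inl i₀.val) = 0 := by
        simp [hq_def, i₀.prop]
      have h1 : q i (Sum.inl i₀.val) = if i₀.val = i.val then a else 0 := by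
        simp [hq_def]
      rw [h0, h1]
      by_cases h : i = i₀
      · subst h; simp
      · have : i₀.val ≠ i.val := fun hc => h (Subtype.ext hc.symm)
        simp [this, h]
    rw [Finset.sum_congr rfl fun i _ => heval i] at this2
    simp only [Finset.sum_ite_eq', Finset.mem_univ, if_true] at this2
    exact (mul_eq_zero.mp this2).resolve_right hapos
  have hq_ind : AffineIndependent ℝ q := by
    rw [affineIndependent_iff_linearIndependent_vsub ℝ q 0]
    exact hLI
  -- transfer into dimension d
  set S := vectorSpan ℝ (Set.range q) with hS_def
  have hfr : Module.finrank ℝ S = d := hq_ind.finrank_vectorSpan (Fintype.card_fin _)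
  let basis : OrthonormalBasis (Fin d) ℝ S :=
    (stdOrthonormalBasis ℝ S).reindex (finCongr hfr)
  let φ : S ≃ₗᵢ[ℝ] EuclideanSpace ℝ (Fin d) := basis.repr
  have hmem : ∀ i : Fin (d + 1), q i - q 0 ∈ S :=
    fun i => vsub_mem_vectorSpan ℝ (Set.mem_range_self i) (Set.mem_range_self 0)
  refine ⟨fun i => φ ⟨q i - q 0, hmem i⟩, ?_, ?_⟩
  · rw [affineIndependent_iff_linearIndependent_vsub ℝ _ 0]
    have hv : LinearIndependent ℝ (fun i : {x : Fin (d + 1) // x ≠ 0} =>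
        (⟨q i - q 0, hmem i⟩ : S)) := by
      apply LinearIndependent.of_comp S.subtype
      exact hLI
    have := hv.map' φ.toLinearEquiv.toLinearMap φ.toLinearEquiv.ker
    convert this using 1
    funext i
    show φ ⟨q i - q 0, _⟩ - φ ⟨q 0 - q 0, _⟩ = _
    have : (⟨q 0 - q 0, hmem 0⟩ : S) = 0 := by
      ext; simp
    rw [this, map_zero, sub_zero]
    rfl
  · intro i j hij
    have hd2 : dist (φ ⟨q i - q 0, hmem i⟩) (φ ⟨q j - q 0, hmem j⟩) = dist (q i) (q j) := by
      rw [φ.dist_map]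
      rw [Subtype.dist_eq]
      show dist (q i - q 0) (q j - q 0) = _
      rw [dist_sub_right]
    rw [hd2]
    exact hdist i j hij
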